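/- arXiv:1504.05600 — 2 statements merged into one kernel-verified Lean document; each statement's English description precedes it below -/
import Mathlib

section
/- Define g(m) := 6^{2/3} π^{1/3} m^{2/3} + 3^{2/3} · 2^{-1/3} · 10^{-1} · π^{-2/3} m^{5/3} for m > 0 (the energy of a single ball of volume m). The largest m > 0 for which g(m) ≤ 2·g(m/2) is m_{c1} = (40π/3)(2^{1/3} + 2^{-1/3} − 1); that is, g(m) ≤ 2 g(m/2) if and only if m ≤ m_{c1}. -/
open Real

/-- The energy of a single ball of volume `m` in ℝ³ (perimeter plus Coulomb self-energy). -/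
noncomputable def gBall (m : ℝ) : ℝ :=
  6 ^ ((2 : ℝ) / 3) * π ^ ((1 : ℝ) / 3) * m ^ ((2 : ℝ) / 3) +
    3 ^ ((2 : ℝ) / 3) * 2 ^ (-(1 : ℝ) / 3) * 10⁻¹ * π ^ (-(2 : ℝ) / 3) * m ^ ((5 : ℝ) / 3)

private lemma alg_iff (m s p c : ℝ) (hp : 0 < p) (hc : 0 < c)
    (hs0 : 0 < s) (hs1 : 1 < s) (hs3 : s ^ 3 = 2) :
    c * (s ^ 2 * p) + c * m * (s ^ 2 / 20) ≤ c * (2 * p) + c * m * (1 / 20) ↔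
      m ≤ 40 * p / (s * (s + 1)) := by
  rw [le_div_iff₀ (by positivity)]
  constructor
  · intro h
    have h2 : c * (s ^ 2 * p + m * (s ^ 2 / 20)) ≤ c * (2 * p + m * (1 / 20)) := by
      linear_combination h
    have h' : s ^ 2 * p + m * (s ^ 2 / 20) ≤ 2 * p + m * (1 / 20) :=
      le_of_mul_le_mul_left h2 hc
    have k1 : m * (s + 1) * (s - 1) ≤ 20 * p * s ^ 2 * (s - 1) := by
      nlinarith [h', hs3, hp]
    have k2 : m * (s + 1) ≤ 20 * p * s ^ 2 := by
      nlinarith [k1, sub_pos.2 hs1]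
    nlinarith [mul_le_mul_of_nonneg_left k2 hs0.le, hs3, hp]
  · intro h
    have k2 : m * (s + 1) ≤ 20 * p * s ^ 2 := by
      nlinarith [h, hs0, hs3, hp, sub_pos.2 hs1]
    have k1 : m * (s + 1) * (s - 1) ≤ 20 * p * s ^ 2 * (s - 1) :=
      mul_le_mul_of_nonneg_right k2 (by linarith)
    have h' : s ^ 2 * p + m * (s ^ 2 / 20) ≤ 2 * p + m * (1 / 20) := by
      nlinarith [k1, hs3]
    nlinarith [mul_le_mul_of_nonneg_left h' hc.le]

/-- A single ball of volume `m` has no more energy than two far-separated balls of volume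
`m/2` each if and only if `m ≤ m_{c1} = (40π/3)(2^{1/3} + 2^{-1/3} − 1)`. -/
theorem ball_splitting_threshold (m : ℝ) (hm : 0 < m) :
    gBall m ≤ 2 * gBall (m / 2) ↔
      m ≤ 40 * π / 3 * (2 ^ ((1 : ℝ) / 3) + 2 ^ (-(1 : ℝ) / 3) - 1) := by
  have hπ : (0:ℝ) < π := pi_pos
  set s : ℝ := (2:ℝ) ^ ((1:ℝ)/3) with hs
  have hs0 : 0 < s := rpow_pos_of_pos two_pos _
  have hs3 : s ^ 3 = 2 := by
    rw [hs, ← rpow_natCast ((2:ℝ) ^ ((1:ℝ)/3)) 3, ← rpow_mul (by norm_num : (0:ℝ) ≤ 2)]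
    norm_num
  have hs1 : 1 < s := by nlinarith [sq_nonneg (s - 1), sq_nonneg (s + 1), hs0]
  have hneg : (2:ℝ) ^ (-(1:ℝ)/3) = s⁻¹ := by
    rw [neg_div, rpow_neg (by norm_num : (0:ℝ) ≤ 2), hs]
  have hsi : s⁻¹ = s ^ 2 / 2 := by
    field_simp
    nlinarith [hs3]
  have h22 : (2:ℝ) ^ ((2:ℝ)/3) = s ^ 2 := by
    rw [hs, ← rpow_natCast ((2:ℝ) ^ ((1:ℝ)/3)) 2, ← rpow_mul (by norm_num : (0:ℝ) ≤ 2)]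
    norm_num
  set t : ℝ := (3:ℝ) ^ ((2:ℝ)/3) with ht
  have ht0 : 0 < t := rpow_pos_of_pos three_pos _
  have h62 : (6:ℝ) ^ ((2:ℝ)/3) = s ^ 2 * t := by
    rw [show (6:ℝ) = 2 * 3 by norm_num, mul_rpow (by norm_num) (by norm_num), h22, ht]
  set q : ℝ := π ^ (-(2:ℝ)/3) with hq
  have hq0 : 0 < q := rpow_pos_of_pos hπ _
  have hpq : π ^ ((1:ℝ)/3) = π * q := by
    rw [show (1:ℝ)/3 = 1 + (-(2:ℝ)/3) by norm_num, rpow_add hπ, rpow_one, hq]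
  set a : ℝ := m ^ ((2:ℝ)/3) with ha
  have ha0 : 0 < a := rpow_pos_of_pos hm _
  have h53 : m ^ ((5:ℝ)/3) = m * a := by
    rw [show (5:ℝ)/3 = 1 + (2:ℝ)/3 by norm_num, rpow_add hm, rpow_one, ha]
  have hm2 : (m/2) ^ ((2:ℝ)/3) = a / s ^ 2 := by
    rw [div_rpow hm.le (by norm_num), h22, ha]
  have hm5 : (m/2) ^ ((5:ℝ)/3) = m * a / (2 * s ^ 2) := by
    rw [div_rpow hm.le (by norm_num), h53,
      show (5:ℝ)/3 = 1 + (2:ℝ)/3 by norm_num, rpow_add (by norm_num : (0:ℝ) < 2), rpow_one, h22]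
  clear_value s t q a
  have e1 : gBall m = t * q * a * (s ^ 2 * π) + t * q * a * m * (s ^ 2 / 20) := by
    rw [gBall, h62, hpq, hneg, h53, hsi, ← ht, ← hq, ← ha]
    ring
  have e2 : 2 * gBall (m/2) = t * q * a * (2 * π) + t * q * a * m * (1 / 20) := by
    rw [gBall, h62, hpq, hneg, hm2, hm5, hsi, ← ht, ← hq]
    field_simp
    ring_nf
  have hC : 40 * π / 3 * (s + s⁻¹ - 1) = 40 * π / (s * (s + 1)) := by
    have hsne : s ≠ 0 := hs0.ne'
    have hs1ne : s + 1 ≠ 0 := by positivity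
    field_simp
    linear_combination hs3
  rw [e1, e2, hneg, hC]
  exact alg_iff m s π (t * q * a) hπ (by positivity) hs0 hs1 hs3
end

section
/- Let v : 𝕋_ℓ → ℝ be a C¹ function with |∇v(x)| ≤ (3/2)(v(x) + C) for all x and v + C ≥ 0. Suppose that for some ball B_r(x₀) with r ≤ 1/6 one has the average bound (1/|B_r|)∫_{B_r(x₀)} v dx ≤ C'. Then v(y) ≤ C + 2C' for all y ∈ B_r(x₀). -/
open MeasureTheory

local notation "E3" => EuclideanSpace ℝ (Fin 3)

/-- If `v` is `C¹` with `|∇v| ≤ (3/2)(v + C)` and `v + C ≥ 0` everywhere, and the average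
of `v` over a ball `B_r(x₀)` with `r ≤ 1/6` is at most `C'`, then `v ≤ C + 2C'` on
`B_r(x₀)`. -/
theorem potential_upper_bound_from_average (v : E3 → ℝ) (C C' : ℝ) (hC : 0 < C)
    (hv : ContDiff ℝ 1 v)
    (hgrad : ∀ x, ‖fderiv ℝ v x‖ ≤ 3 / 2 * (v x + C))
    (hpos : ∀ x, 0 ≤ v x + C)
    (x₀ : E3) (r : ℝ) (hr : 0 < r) (hr6 : r ≤ 1 / 6)
    (havg : ∫ x in Metric.ball x₀ r, v x ≤ C' * (volume (Metric.ball x₀ r)).toReal) :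
    ∀ y ∈ Metric.ball x₀ r, v y ≤ C + 2 * C' := by
  -- the closed ball is compact and nonempty; take a max point yM
  set K := Metric.closedBall x₀ r with hK
  have hKne : K.Nonempty := ⟨x₀, Metric.mem_closedBall_self hr.le⟩
  obtain ⟨yM, hyMK, hmax⟩ := (isCompact_closedBall x₀ r).exists_isMaxOn hKne
    (hv.continuous.continuousOn)
  -- measure facts
  have hμpos : (0 : ENNReal) < volume (Metric.ball x₀ r) :=
    Metric.measure_ball_pos volume x₀ hr
  have hμfin : volume (Metric.ball x₀ r) ≠ ⊤ := measure_ball_lt_top.ne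
  -- a point x₁ in the ball with v x₁ ≤ C'
  have hint : IntegrableOn v (Metric.ball x₀ r) volume :=
    (hv.continuous.continuousOn.integrableOn_compact (isCompact_closedBall x₀ r)).mono_set
      Metric.ball_subset_closedBall
  obtain ⟨x₁, hx₁, hx₁le⟩ := exists_le_setAverage hμpos.ne' hμfin hint
  have hx₁C' : v x₁ ≤ C' := by
    refine hx₁le.trans ?_
    rw [setAverage_eq]
    rw [smul_eq_mul]
    have hvol : 0 < (volume (Metric.ball x₀ r)).toReal :=
      ENNReal.toReal_pos hμpos.ne' hμfin
    show (volume (Metric.ball x₀ r)).toReal⁻¹ * _ ≤ C'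
    rw [inv_mul_le_iff₀ hvol, mul_comm]
    exact havg
  -- MVT bound on the closed ball
  have hM : ∀ x ∈ K, ‖fderiv ℝ v x‖ ≤ 3 / 2 * (v yM + C) := by
    intro x hx
    refine (hgrad x).trans ?_
    have hle : v x ≤ v yM := hmax hx
    linarith
  have hx₁K : x₁ ∈ K := Metric.ball_subset_closedBall hx₁
  have hmvt := (convex_closedBall x₀ r).norm_image_sub_le_of_norm_fderiv_le
    (fun x _ => hv.differentiable one_ne_zero x) hM hx₁K hyMK
  have hdist : ‖yM - x₁‖ ≤ 1 / 3 := by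
    have h1 : dist yM x₁ ≤ dist yM x₀ + dist x₀ x₁ := dist_triangle _ _ _
    have h2 : dist yM x₀ ≤ r := Metric.mem_closedBall.mp hyMK
    have h3 : dist x₀ x₁ ≤ r := by
      rw [dist_comm]; exact (Metric.mem_ball.mp hx₁).le
    rw [← dist_eq_norm]
    linarith
  have key : v yM ≤ C + 2 * C' := by
    have h1 : v yM - v x₁ ≤ ‖v yM - v x₁‖ := le_abs_self _
    have h2 : ‖v yM - v x₁‖ ≤ 3 / 2 * (v yM + C) * ‖yM - x₁‖ := hmvt
    have h3 : 3 / 2 * (v yM + C) * ‖yM - x₁‖ ≤ 3 / 2 * (v yM + C) * (1 / 3) := by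
      have : 0 ≤ 3 / 2 * (v yM + C) := by nlinarith [hpos yM]
      exact mul_le_mul_of_nonneg_left hdist this
    nlinarith
  intro y hy
  exact (hmax (Metric.ball_subset_closedBall hy)).trans key
end
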